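/- The odd-even transposition sort on the path P_n sorts correctly: starting from any arrangement of n distinct keys on vertices 1,...,n, after n rounds—where in odd rounds we compare-exchange pairs (i,i+1) for all odd i, and in even rounds we compare-exchange pairs (i,i+1) for all even i, always placing the smaller key on the lower-indexed vertex—the keys are in sorted order (vertex i holds the key of rank i). -/

import Mathlib

/-- One round of odd-even transposition sort on the path with `n` vertices
(`0`-indexed positions).  Positions `v` with `v % 2 = p % 2` are the lower
endpoints of the compared pairs `(v, v+1)`; the smaller key goes to the
lower-indexed vertex. -/
noncomputable def oeStep (n : ℕ) (p : ℕ) (f : Fin n → ℕ) : Fin n → ℕ := fun v =>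
  if v.val % 2 = p % 2 then
    if h : v.val + 1 < n then min (f v) (f ⟨v.val + 1, h⟩) else f v
  else
    if v.val ≠ 0 then
      max (f ⟨v.val - 1, lt_of_le_of_lt (Nat.sub_le _ _) v.isLt⟩) (f v)
    else f v

/-- Running `t` rounds of odd-even transposition sort (round `t+1` compares the
pairs `(i, i+1)` with `i ≡ t (mod 2)` in `0`-indexed positions, i.e. odd rounds
compare pairs with odd lower index in `1`-indexed positions). -/
noncomputable def oeRun (n : ℕ) : ℕ → (Fin n → ℕ) → (Fin n → ℕ)
  | 0, f => f
  | t + 1, f => oeStep n t (oeRun n t f)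

namespace OddEvenAux

theorem oeStep_comm {n p : ℕ} (g : ℕ → ℕ) (hg : Monotone g) (f : Fin n → ℕ) :
    oeStep n p (fun v => g (f v)) = fun v => g (oeStep n p f v) := by
  funext v
  unfold oeStep
  split_ifs <;> simp [hg.map_min, hg.map_max]

theorem oeRun_comm {n : ℕ} (g : ℕ → ℕ) (hg : Monotone g) (f : Fin n → ℕ) (t : ℕ) :
    oeRun n t (fun v => g (f v)) = fun v => g (oeRun n t f v) := by
  induction t with
  | zero => rfl
  | succ t ih =>
      show oeStep n t (oeRun n t (fun v => g (f v))) = _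
      rw [ih, oeStep_comm g hg]
      rfl

/-- the partner of a vertex in round of parity `p` -/
def pr (n p : ℕ) (v : Fin n) : Fin n :=
  if v.val % 2 = p % 2 then
    (if h : v.val + 1 < n then ⟨v.val + 1, h⟩ else v)
  else
    (if h : v.val ≠ 0 then ⟨v.val - 1, lt_of_le_of_lt (Nat.sub_le _ _) v.isLt⟩ else v)

theorem pr_pr {n p : ℕ} (v : Fin n) : pr n p (pr n p v) = v := by
  unfold pr
  split_ifs with h1 h2 h3 h4 h5 h6 h7 h8 h9 h10 <;>
    first | rfl | (apply Fin.ext; simp at * <;> omega)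

theorem low_pair {n p : ℕ} (f : Fin n → ℕ) (v : Fin n) (h1 : v.val % 2 = p % 2)
    (h2 : v.val + 1 < n) :
    oeStep n p f v = min (f v) (f ⟨v.val + 1, h2⟩) ∧
      oeStep n p f ⟨v.val + 1, h2⟩ = max (f v) (f ⟨v.val + 1, h2⟩) := by
  constructor
  · unfold oeStep
    rw [if_pos h1, dif_pos h2]
  · unfold oeStep
    have hpar : ¬ ((⟨v.val + 1, h2⟩ : Fin n).val % 2 = p % 2) := by simp; omega
    rw [if_neg hpar, if_pos (by simp : ((⟨v.val + 1, h2⟩ : Fin n).val ≠ 0))]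
    congr 1

theorem oeStep_mem {n p : ℕ} (f : Fin n → ℕ) (v : Fin n) :
    oeStep n p f v = f v ∨ oeStep n p f v = f (pr n p v) := by
  unfold oeStep pr
  split_ifs with h1 h2 h3
  · rcases min_cases (f v) (f ⟨v.val + 1, h2⟩) with ⟨he, _⟩ | ⟨he, _⟩
    · exact Or.inl he
    · exact Or.inr he
  · exact Or.inl rfl
  · rcases max_cases (f ⟨v.val - 1, lt_of_le_of_lt (Nat.sub_le _ _) v.isLt⟩) (f v) with
      ⟨he, _⟩ | ⟨he, _⟩
    · exact Or.inr he
    · exact Or.inl he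
  · exact Or.inl rfl

theorem pair_contra {n p : ℕ} {f : Fin n → ℕ} (hf : Function.Injective f) {u v : Fin n}
    (huv : u ≠ v) (hu : u = pr n p v) (h : oeStep n p f u = oeStep n p f v) : False := by
  unfold pr at hu
  split_ifs at hu with h1 h2 h3
  · -- v low, u = v+1
    obtain ⟨e1, e2⟩ := low_pair f v h1 h2
    rw [hu, e2, e1] at h
    have h' : f v = f ⟨v.val + 1, h2⟩ := sup_eq_inf.mp h
    have h'' := hf h'
    exact huv (hu.trans h''.symm)
  · exact huv hu
  · -- v high, u = v - 1
    have hv1 : v.val - 1 + 1 = v.val := Nat.succ_pred_eq_of_pos (Nat.pos_of_ne_zero h3)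
    have hu1 : u.val % 2 = p % 2 := by
      rw [hu]; simp; omega
    have hu2 : u.val + 1 < n := by rw [hu]; simpa [hv1] using v.isLt
    obtain ⟨e1, e2⟩ := low_pair f u hu1 hu2
    have huval : u.val = v.val - 1 := by rw [hu]
    have hveq : (⟨u.val + 1, hu2⟩ : Fin n) = v := by
      apply Fin.ext; simp [huval, hv1]
    rw [hveq] at e1 e2
    rw [e1, e2] at h
    have h' : f u = f v := sup_eq_inf.mp h.symm
    exact huv (hf h')
  · exact huv hu

theorem oeStep_injective {n p : ℕ} {f : Fin n → ℕ} (hf : Function.Injective f) :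
    Function.Injective (oeStep n p f) := by
  intro u v h
  by_contra hne
  rcases oeStep_mem (p := p) f u with hu | hu <;> rcases oeStep_mem (p := p) f v with hv | hv
  · exact hne (hf (hu ▸ hv ▸ h))
  · exact pair_contra hf hne (hf (hu ▸ hv ▸ h)) h
  · have hpv : pr n p u = v := hf (hu ▸ hv ▸ h)
    exact pair_contra hf (Ne.symm hne) hpv.symm h.symm
  · have : pr n p u = pr n p v := hf (hu ▸ hv ▸ h)
    have := congrArg (pr n p) this
    rw [pr_pr, pr_pr] at this
    exact hne this

theorem oeRun_injective {n : ℕ} {f : Fin n → ℕ} (hf : Function.Injective f) (t : ℕ) :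
    Function.Injective (oeRun n t f) := by
  induction t with
  | zero => exact hf
  | succ t ih => exact oeStep_injective ih

end OddEvenAux
namespace OddEvenAux

variable {n : ℕ}

/-- ascending list of positions holding a `1` -/
def onesL (f : Fin n → ℕ) : List ℕ :=
  ((Finset.univ.filter (fun v => f v = 1)).sort (· ≤ ·)).map Fin.val

def kk (f : Fin n → ℕ) : ℕ := (onesL f).length

/-- `PP f t j` : position of the `j`-th rightmost one at time `t` (sentinel `n` at `j = 0`). -/
def PP (f : Fin n → ℕ) : ℕ → ℕ → ℕ
  | 0, j => if j = 0 then n else (onesL f).getD (kk f - j) 0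
  | (t+1), j => if j = 0 then n else
      if PP f t j % 2 = t % 2 ∧ PP f t j + 1 < PP f t (j-1) then PP f t j + 1
      else PP f t j

theorem PP_sent (f : Fin n → ℕ) (t : ℕ) : PP f t 0 = n := by
  cases t <;> simp [PP]

theorem PP_succ (f : Fin n → ℕ) {j : ℕ} (hj : 1 ≤ j) (t : ℕ) :
    PP f (t+1) j = if PP f t j % 2 = t % 2 ∧ PP f t j + 1 < PP f t (j-1)
      then PP f t j + 1 else PP f t j := by
  have : ¬ (j = 0) := by omega
  simp [PP, this]

theorem PP_mono (f : Fin n → ℕ) (j t : ℕ) : PP f t j ≤ PP f (t+1) j := by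
  rcases Nat.eq_zero_or_pos j with rfl | hj
  · rw [PP_sent, PP_sent]
  · rw [PP_succ f hj]
    split_ifs <;> omega

theorem onesL_sorted (f : Fin n → ℕ) : (onesL f).Pairwise (· < ·) :=
  List.Pairwise.map Fin.val (fun _ _ h => h) (Finset.sortedLT_sort _).pairwise

theorem mem_onesL {f : Fin n → ℕ} {x : ℕ} :
    x ∈ onesL f ↔ ∃ h : x < n, f ⟨x, h⟩ = 1 := by
  simp only [onesL, List.mem_map, Finset.mem_sort, Finset.mem_filter, Finset.mem_univ, true_and]
  constructor
  · rintro ⟨v, hv, rfl⟩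
    exact ⟨v.isLt, by simpa using hv⟩
  · rintro ⟨h, hf⟩
    exact ⟨⟨x, h⟩, hf, rfl⟩

theorem PP_zero_get (f : Fin n → ℕ) {j : ℕ} (h1 : 1 ≤ j) (h2 : j ≤ kk f) :
    PP f 0 j = (onesL f).get ⟨kk f - j, by unfold kk at *; omega⟩ := by
  have : ¬ (j = 0) := by omega
  simp only [PP, this, if_false]
  exact List.getD_eq_get _ _ ⟨kk f - j, _⟩

/-- the invariant: strictly descending positions -/
def Desc (f : Fin n → ℕ) (t : ℕ) : Prop :=
  ∀ j, 1 ≤ j → j ≤ kk f → PP f t j < PP f t (j-1)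

/-- the invariant: the ones are exactly at the tracked positions -/
def Chr (f : Fin n → ℕ) (t : ℕ) : Prop :=
  ∀ v : Fin n, oeRun n t f v = 1 ↔ ∃ j, 1 ≤ j ∧ j ≤ kk f ∧ PP f t j = v.val

theorem chain {f : Fin n → ℕ} {t : ℕ} (hd : Desc f t) :
    ∀ j i, i ≤ j → j ≤ kk f → PP f t j + (j - i) ≤ PP f t i := by
  intro j
  induction j with
  | zero => intro i hi _; interval_cases i; simp
  | succ m ih =>
      intro i hi hk
      rcases Nat.eq_or_lt_of_le hi with rfl | hlt
      · simp
      · have h1 := hd (m+1) (by omega) hk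
        have h2 := ih i (by omega) (by omega)
        simp only [Nat.add_sub_cancel] at h1
        omega

theorem PP_le_n {f : Fin n → ℕ} {t : ℕ} (hd : Desc f t) {j : ℕ} (hk : j ≤ kk f) :
    PP f t j + j ≤ n := by
  have := chain hd j 0 (Nat.zero_le _) hk
  rw [PP_sent] at this
  omega

theorem PP_strict {f : Fin n → ℕ} {t : ℕ} (hd : Desc f t) {i j : ℕ} (hij : i < j)
    (hk : j ≤ kk f) : PP f t j < PP f t i := by
  have := chain hd j i (by omega) hk
  omega

theorem run01 {f : Fin n → ℕ} (h01 : ∀ v, f v = 0 ∨ f v = 1) (t : ℕ) :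
    ∀ v, oeRun n t f v = 0 ∨ oeRun n t f v = 1 := by
  induction t with
  | zero => exact h01
  | succ t ih =>
      intro v
      show oeStep n t (oeRun n t f) v = 0 ∨ oeStep n t (oeRun n t f) v = 1
      unfold oeStep
      split_ifs with h1 h2 h3
      · rcases min_cases (oeRun n t f v) (oeRun n t f ⟨v.val + 1, h2⟩) with ⟨he, _⟩ | ⟨he, _⟩ <;>
          rw [he]
        · exact ih v
        · exact ih _
      · exact ih v
      · rcases max_cases (oeRun n t f ⟨v.val - 1, lt_of_le_of_lt (Nat.sub_le _ _) v.isLt⟩)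
          (oeRun n t f v) with ⟨he, _⟩ | ⟨he, _⟩ <;> rw [he]
        · exact ih _
        · exact ih v
      · exact ih v

theorem desc0 (f : Fin n → ℕ) : Desc f 0 := by
  intro j h1 h2
  rcases Nat.eq_or_lt_of_le h1 with rfl | hj2
  · -- j = 1 : PP f 0 1 < PP f 0 0 = n
    rw [PP_sent, PP_zero_get f le_rfl h2]
    have hmem : (onesL f).get ⟨kk f - 1, by unfold kk at *; omega⟩ ∈ onesL f := List.get_mem _ _
    obtain ⟨h, _⟩ := mem_onesL.mp hmem
    exact h
  · -- j ≥ 2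
    have hj1 : 1 ≤ j - 1 := by omega
    rw [PP_zero_get f h1 h2, PP_zero_get f hj1 (by omega)]
    exact (onesL_sorted f).rel_get_of_lt (by simp [Fin.lt_def]; omega)

theorem chr0 (f : Fin n → ℕ) : Chr f 0 := by
  intro v
  show f v = 1 ↔ _
  constructor
  · intro hv
    have hmem : v.val ∈ onesL f := mem_onesL.mpr ⟨v.isLt, by simpa using hv⟩
    obtain ⟨i, hi⟩ := List.mem_iff_get.mp hmem
    refine ⟨kk f - i.val, by have := i.isLt; unfold kk at *; omega,
      by have := i.isLt; unfold kk at *; omega, ?_⟩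
    rw [PP_zero_get f (by have := i.isLt; unfold kk at *; omega)
      (by have := i.isLt; unfold kk at *; omega)]
    have hidx : kk f - (kk f - i.val) = i.val := by have := i.isLt; unfold kk at *; omega
    rw [← hi]
    congr 1
    exact Fin.ext (by simpa using hidx)
  · rintro ⟨j, hj1, hjk, hPj⟩
    rw [PP_zero_get f hj1 hjk] at hPj
    have hmem : v.val ∈ onesL f := hPj ▸ List.get_mem _ _
    obtain ⟨h, hf⟩ := mem_onesL.mp hmem
    simpa using hf

end OddEvenAux
namespace OddEvenAux

variable {n : ℕ}

theorem inv_step {f : Fin n → ℕ} (h01 : ∀ v, f v = 0 ∨ f v = 1) (t : ℕ)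
    (hd : Desc f t) (hc : Chr f t) : Desc f (t+1) ∧ Chr f (t+1) := by
  constructor
  · -- descending is preserved
    intro j h1 h2
    rw [PP_succ f h1]
    have hmono := PP_mono f (j-1) t
    split_ifs with hM
    · exact lt_of_lt_of_le hM.2 hmono
    · exact lt_of_lt_of_le (hd j h1 h2) hmono
  · -- characterization is preserved
    intro v
    show oeStep n t (oeRun n t f) v = 1 ↔ _
    set b := oeRun n t f with hbdef
    have hb01 : ∀ w, b w = 0 ∨ b w = 1 := run01 h01 t
    unfold oeStep
    by_cases hp : v.val % 2 = t % 2
    · rw [if_pos hp]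
      by_cases hvb : v.val + 1 < n
      · rw [dif_pos hvb]
        constructor
        · intro hmin
          have h1 : b v = 1 := by
            rcases hb01 v with h | h <;> rcases hb01 ⟨v.val + 1, hvb⟩ with h' | h' <;> omega
          have h2 : b ⟨v.val + 1, hvb⟩ = 1 := by
            rcases hb01 v with h | h <;> rcases hb01 ⟨v.val + 1, hvb⟩ with h' | h' <;> omega
          obtain ⟨j, hj1, hjk, hPj⟩ := (hc v).mp h1
          obtain ⟨j2, hj21, hj2k, hPj2⟩ := (hc ⟨v.val + 1, hvb⟩).mp h2
          simp only at hPj2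
          -- j2 = j - 1
          have hj2j : j2 < j := by
            by_contra hcon
            push_neg at hcon
            rcases Nat.eq_or_lt_of_le hcon with rfl | hlt
            · omega
            · have := PP_strict hd hlt hj2k
              omega
          have hj2eq : j2 = j - 1 := by
            by_contra hne
            have hle : j2 ≤ j - 2 := by omega
            have hch := chain hd (j-1) j2 (by omega) (by omega)
            have hdd := hd j hj1 hjk
            omega
          refine ⟨j, hj1, hjk, ?_⟩
          rw [PP_succ f hj1, if_neg (by rw [← hj2eq, hPj2]; omega)]
          exact hPj
        · rintro ⟨j, hj1, hjk, hPj⟩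
          rw [PP_succ f hj1] at hPj
          split_ifs at hPj with hM
          · omega
          · -- PP f t j = v.val, and it is blocked
            have hbv : b v = 1 := (hc v).mpr ⟨j, hj1, hjk, hPj⟩
            have hblocked : ¬ (PP f t j + 1 < PP f t (j-1)) := by
              intro hcon
              exact hM ⟨by omega, hcon⟩
            have hj1ne : ¬ (j - 1 = 0) := by
              intro h0
              have := PP_sent f t
              rw [← h0] at this
              omega
            have hgt : PP f t j < PP f t (j-1) := hd j hj1 hjk
            have heq : PP f t (j-1) = v.val + 1 := by omega
            have hbv1 : b ⟨v.val + 1, hvb⟩ = 1 :=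
              (hc _).mpr ⟨j-1, by omega, by omega, by simpa using heq⟩
            rw [hbv, hbv1]
            simp
      · rw [dif_neg hvb]
        constructor
        · intro hbv
          obtain ⟨j, hj1, hjk, hPj⟩ := (hc v).mp hbv
          refine ⟨j, hj1, hjk, ?_⟩
          rw [PP_succ f hj1, if_neg ?_]
          · exact hPj
          · rintro ⟨-, hcon⟩
            rcases Nat.eq_zero_or_pos (j-1) with h0 | h0
            · rw [h0, PP_sent] at hcon; omega
            · have := PP_le_n hd (show j - 1 ≤ kk f by omega)
              omega
        · rintro ⟨j, hj1, hjk, hPj⟩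
          rw [PP_succ f hj1] at hPj
          split_ifs at hPj with hM
          · omega
          · exact (hc v).mpr ⟨j, hj1, hjk, hPj⟩
    · rw [if_neg hp]
      by_cases hv0 : v.val ≠ 0
      · rw [if_pos hv0]
        constructor
        · intro hmax
          by_cases hbv : b v = 1
          · obtain ⟨j, hj1, hjk, hPj⟩ := (hc v).mp hbv
            refine ⟨j, hj1, hjk, ?_⟩
            rw [PP_succ f hj1, if_neg (by rintro ⟨hcon, -⟩; omega)]
            exact hPj
          · have hbv' : b v = 0 := by rcases hb01 v with h | h; exact h; omega
            have hbv1 : b ⟨v.val - 1, lt_of_le_of_lt (Nat.sub_le _ _) v.isLt⟩ = 1 := by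
              rcases hb01 ⟨v.val - 1, lt_of_le_of_lt (Nat.sub_le _ _) v.isLt⟩ with h | h <;> omega
            obtain ⟨j, hj1, hjk, hPj⟩ := (hc _).mp hbv1
            simp only at hPj
            refine ⟨j, hj1, hjk, ?_⟩
            have hgt : PP f t j < PP f t (j-1) := hd j hj1 hjk
            have hne : PP f t (j-1) ≠ v.val := by
              intro heq
              rcases Nat.eq_zero_or_pos (j-1) with h0 | h0
              · rw [h0, PP_sent] at heq
                have := v.isLt; omega
              · have : b v = 1 := (hc v).mpr ⟨j-1, h0, by omega, heq⟩
                omega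
            rw [PP_succ f hj1, if_pos ⟨by omega, by omega⟩]
            omega
        · rintro ⟨j, hj1, hjk, hPj⟩
          rw [PP_succ f hj1] at hPj
          have hv1 := hb01 v
          split_ifs at hPj with hM
          · have hb1 : b ⟨v.val - 1, lt_of_le_of_lt (Nat.sub_le _ _) v.isLt⟩ = 1 :=
              (hc _).mpr ⟨j, hj1, hjk, by simp only; omega⟩
            omega
          · have hb1 : b v = 1 := (hc v).mpr ⟨j, hj1, hjk, hPj⟩
            have := hb01 ⟨v.val - 1, lt_of_le_of_lt (Nat.sub_le _ _) v.isLt⟩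
            omega
      · rw [if_neg hv0]
        push_neg at hv0
        constructor
        · intro hbv
          obtain ⟨j, hj1, hjk, hPj⟩ := (hc v).mp hbv
          refine ⟨j, hj1, hjk, ?_⟩
          rw [PP_succ f hj1, if_neg (by rintro ⟨hcon, -⟩; omega)]
          exact hPj
        · rintro ⟨j, hj1, hjk, hPj⟩
          rw [PP_succ f hj1] at hPj
          split_ifs at hPj with hM
          · omega
          · exact (hc v).mpr ⟨j, hj1, hjk, hPj⟩

theorem inv_all {f : Fin n → ℕ} (h01 : ∀ v, f v = 0 ∨ f v = 1) (t : ℕ) :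
    Desc f t ∧ Chr f t := by
  induction t with
  | zero => exact ⟨desc0 f, chr0 f⟩
  | succ t ih => exact inv_step h01 t ih.1 ih.2

end OddEvenAux
namespace OddEvenAux

variable {n : ℕ}

/-- The key lemma: from round `j` on, the `j`-th rightmost one is either in its
final zone or is about to move right. -/
theorem S_main {f : Fin n → ℕ} (h01 : ∀ v, f v = 0 ∨ f v = 1) :
    ∀ j, j ≤ kk f → ∀ t, j ≤ t →
      n - j ≤ PP f t j ∨ (PP f t j % 2 = t % 2 ∧ PP f t j + 1 < PP f t (j-1)) := by
  intro j
  induction j with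
  | zero =>
      intro _ t _
      left
      rw [PP_sent]
      omega
  | succ i ih =>
      intro hjk t hjt
      obtain ⟨s, rfl⟩ : ∃ s, t = s + 1 := ⟨t - 1, by omega⟩
      by_cases hcase : n - (i+1) ≤ PP f (s+1) (i+1)
      · exact Or.inl hcase
      push_neg at hcase
      right
      have hdesc := fun u => (inv_all h01 u).1
      have hred : i + 1 - 1 = i := rfl
      by_cases cp : PP f (s+1) (i+1) % 2 = (s+1) % 2
      · refine ⟨cp, ?_⟩
        by_contra hbl
        push_neg at hbl
        have hgt : PP f (s+1) (i+1) < PP f (s+1) (i+1-1) :=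
          hdesc (s+1) (i+1) (by omega) hjk
        rw [hred] at hgt hbl
        have heq : PP f (s+1) i = PP f (s+1) (i+1) + 1 := by omega
        rcases ih (by omega) (s+1) (by omega) with hA | hB
        · omega
        · omega
      · exfalso
        have hstep := PP_succ f (show 1 ≤ i + 1 by omega) s
        by_cases hM : PP f s (i+1) % 2 = s % 2 ∧ PP f s (i+1) + 1 < PP f s (i+1-1)
        · rw [if_pos hM] at hstep
          omega
        · rw [if_neg hM] at hstep
          have cps : PP f s (i+1) % 2 = s % 2 := by omega
          have hnb : PP f s (i+1-1) ≤ PP f s (i+1) + 1 := by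
            by_contra hh
            push_neg at hh
            exact hM ⟨cps, hh⟩
          have hgt : PP f s (i+1) < PP f s (i+1-1) := hdesc s (i+1) (by omega) hjk
          rw [hred] at hgt hnb
          have heq : PP f s i = PP f s (i+1) + 1 := by omega
          rcases ih (by omega) s (by omega) with hA | hB
          · omega
          · omega

theorem G_main {f : Fin n → ℕ} (h01 : ∀ v, f v = 0 ∨ f v = 1) {j : ℕ} (hj1 : 1 ≤ j)
    (hjk : j ≤ kk f) : ∀ t, min (n - j) (t - j) ≤ PP f t j := by
  intro t
  induction t with
  | zero => omega
  | succ s ihs =>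
      by_cases hts : s + 1 ≤ j
      · have h0 : s + 1 - j = 0 := by omega
        rw [h0]
        omega
      · have hsj : j ≤ s := by omega
        rcases S_main h01 j hjk s hsj with hA | hB
        · have := PP_mono f j s
          omega
        · have hstep := PP_succ f hj1 s
          rw [if_pos hB] at hstep
          omega

theorem final_pos {f : Fin n → ℕ} (h01 : ∀ v, f v = 0 ∨ f v = 1) {j : ℕ} (hj1 : 1 ≤ j)
    (hjk : j ≤ kk f) : PP f n j = n - j := by
  have h1 := G_main h01 hj1 hjk n
  have h2 := PP_le_n (inv_all h01 n).1 hjk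
  omega

theorem core_mono {f : Fin n → ℕ} (h01 : ∀ v, f v = 0 ∨ f v = 1) :
    Monotone (oeRun n n f) := by
  intro v w hvw
  have hchr := (inv_all h01 n).2
  rcases run01 h01 n v with hv0 | hv1
  · rw [hv0]
    exact Nat.zero_le _
  · rw [hv1]
    obtain ⟨j, hj1, hjk, hPj⟩ := (hchr v).mp hv1
    rw [final_pos h01 hj1 hjk] at hPj
    have hvw' : v.val ≤ w.val := hvw
    have hwlt := w.isLt
    have hvlt := v.isLt
    have hw : oeRun n n f w = 1 := by
      apply (hchr w).mpr
      refine ⟨n - w.val, by omega, by omega, ?_⟩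
      rw [final_pos h01 (by omega) (by omega)]
      omega
    rw [hw]

end OddEvenAux

/-- after `n` rounds of odd-even transposition sort on the path
`P_n`, any arrangement of distinct keys is sorted: vertex `i` holds the key of
rank `i`. -/
theorem stmt1 (n : ℕ) (f : Fin n → ℕ) (hf : Function.Injective f) :
    StrictMono (oeRun n n f) := by
  have hmono : Monotone (oeRun n n f) := by
    intro v w hvw
    by_contra hlt
    push_neg at hlt
    set c := oeRun n n f v with hc
    have hg : Monotone (fun x : ℕ => if c ≤ x then 1 else 0) := by
      intro a b hab
      dsimp only
      split_ifs with h1 h2 <;> omega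
    have h01 : ∀ v' : Fin n, (fun v' => if c ≤ f v' then 1 else 0) v' = 0 ∨
        (fun v' => if c ≤ f v' then 1 else 0) v' = 1 := by
      intro v'
      dsimp only
      split_ifs <;> simp
    have hm := OddEvenAux.core_mono (f := fun v' => if c ≤ f v' then 1 else 0) h01
    rw [OddEvenAux.oeRun_comm _ hg] at hm
    have hle := hm hvw
    simp only at hle
    rw [if_pos (le_refl c), if_neg (by omega)] at hle
    omega
  exact hmono.strictMono_of_injective (OddEvenAux.oeRun_injective hf n)
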